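/- Normal form for derived method operations: for every nonempty set S, every functional unit H for S, and every instruction sequence x over I(H), there exists an instruction sequence y over I(H) of the form u_1,…,u_k,!t,!f, in which each u_i is a positive test instruction, a forward jump instruction, or a backward jump instruction, such that ⌈y⌉_H = ⌈x⌉_H as partial functions from S to Bool × S. -/

import Mathlib

/-- Primitive instructions: plain basic `f.m`, positive test `+f.m`, negative test `-f.m`
(method names are natural numbers, there is a single focus `f`), forward jump `#l`,
backward jump `\l`, and the positive/negative termination instructions `!t` / `!f`. -/
inductive Instr : Type where
  | basic (m : ℕ)
  | postest (m : ℕ)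
  | negtest (m : ℕ)
  | fjump (l : ℕ)
  | bjump (l : ℕ)
  | haltT
  | haltF
deriving DecidableEq

/-- A functional unit for a state space `S`: a finite, functional set of
(method name, method operation) pairs, where a method operation is a total
function `S → Bool × S`. -/
structure FU (S : Type*) where
  carrier : Set (ℕ × (S → Bool × S))
  finite : carrier.Finite
  functional : ∀ {m : ℕ} {M M' : S → Bool × S},
    (m, M) ∈ carrier → (m, M') ∈ carrier → M = M'

/-- The interface of a functional unit: the set of method names occurring in it. -/
def FU.iface {S : Type*} (H : FU S) : Set ℕ := {m | ∃ M, (m, M) ∈ H.carrier}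

/-- The method operation named `m` in `H` (an arbitrary fixed value if `m ∉ I(H)`). -/
noncomputable def FU.op {S : Type*} (H : FU S) (m : ℕ) (s : S) : Bool × S :=
  letI := Classical.propDecidable
  if h : ∃ M, (m, M) ∈ H.carrier then h.choose s else (true, s)

/-- The restriction `⟨I, H⟩` of a functional unit to a set `I` of method names. -/
def FU.restrict {S : Type*} (H : FU S) (I : Set ℕ) : FU S where
  carrier := {p ∈ H.carrier | p.1 ∈ I}
  finite := H.finite.subset (Set.sep_subset _ _)
  functional := fun hM hM' => H.functional hM.1 hM'.1

/-- The method names used by an instruction all belong to `I`. -/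
def Instr.namesIn (I : Set ℕ) : Instr → Prop
  | .basic m => m ∈ I
  | .postest m => m ∈ I
  | .negtest m => m ∈ I
  | _ => True

/-- An instruction sequence over a set `I` of method names: a finite nonempty list of
primitive instructions whose method names belong to `I`. -/
def InstrSeqOver (I : Set ℕ) (x : List Instr) : Prop :=
  x ≠ [] ∧ ∀ u ∈ x, u.namesIn I

/-- `Exec H x i s b s'` : execution of the instruction sequence `x` on the functional
unit `H`, from (0-based) position `i` in state `s`, terminates delivering the Boolean
value `b` with final state `s'`.  (Position `i` here corresponds to the 1-based
position `i+1`; positions outside the sequence, jumps `#0`/`\0`, and infinite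
executions admit no derivation, i.e. execution does not terminate.) -/
inductive Exec {S : Type*} (H : FU S) (x : List Instr) : ℕ → S → Bool → S → Prop where
  | basic {i : ℕ} {s : S} {b : Bool} {s' : S} (m : ℕ)
      (hu : x[i]? = some (Instr.basic m))
      (h : Exec H x (i + 1) (H.op m s).2 b s') : Exec H x i s b s'
  | posT {i : ℕ} {s : S} {b : Bool} {s' : S} (m : ℕ)
      (hu : x[i]? = some (Instr.postest m)) (hr : (H.op m s).1 = true)
      (h : Exec H x (i + 1) (H.op m s).2 b s') : Exec H x i s b s'
  | posF {i : ℕ} {s : S} {b : Bool} {s' : S} (m : ℕ)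
      (hu : x[i]? = some (Instr.postest m)) (hr : (H.op m s).1 = false)
      (h : Exec H x (i + 2) (H.op m s).2 b s') : Exec H x i s b s'
  | negT {i : ℕ} {s : S} {b : Bool} {s' : S} (m : ℕ)
      (hu : x[i]? = some (Instr.negtest m)) (hr : (H.op m s).1 = true)
      (h : Exec H x (i + 2) (H.op m s).2 b s') : Exec H x i s b s'
  | negF {i : ℕ} {s : S} {b : Bool} {s' : S} (m : ℕ)
      (hu : x[i]? = some (Instr.negtest m)) (hr : (H.op m s).1 = false)
      (h : Exec H x (i + 1) (H.op m s).2 b s') : Exec H x i s b s'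
  | fjump {i : ℕ} {s : S} {b : Bool} {s' : S} (l : ℕ)
      (hu : x[i]? = some (Instr.fjump l))
      (h : Exec H x (i + l) s b s') : Exec H x i s b s'
  | bjump {i : ℕ} {s : S} {b : Bool} {s' : S} (l : ℕ)
      (hu : x[i]? = some (Instr.bjump l)) (hl : l ≤ i)
      (h : Exec H x (i - l) s b s') : Exec H x i s b s'
  | haltT {i : ℕ} {s : S} (hu : x[i]? = some Instr.haltT) : Exec H x i s true s
  | haltF {i : ℕ} {s : S} (hu : x[i]? = some Instr.haltF) : Exec H x i s false s

/-- `M` is a derived method operation of `H`: there is an instruction sequence `x`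
over `I(H)` whose produced partial method operation `⌈x⌉_H` is total and equals `M`. -/
def DerivedOp {S : Type*} (H : FU S) (M : S → Bool × S) : Prop :=
  ∃ x : List Instr, InstrSeqOver H.iface x ∧ ∀ s, Exec H x 0 s (M s).1 (M s).2

/-- `H ≤ H'` : every method operation of `H` is a derived method operation of `H'`. -/
def FU.le {S : Type*} (H H' : FU S) : Prop :=
  ∀ m M, (m, M) ∈ H.carrier → DerivedOp H' M

/-- `H ≡ H'` : `H ≤ H'` and `H' ≤ H`. -/
def FU.equiv {S : Type*} (H H' : FU S) : Prop := FU.le H H' ∧ FU.le H' H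

/-- A method operation on ℕ is computable if both its components are. -/
def ComputableMO (M : ℕ → Bool × ℕ) : Prop :=
  Computable (fun n => (M n).1) ∧ Computable (fun n => (M n).2)

/-- A functional unit for ℕ is computable if all its method operations are. -/
def ComputableFU (H : FU ℕ) : Prop :=
  ∀ m M, (m, M) ∈ H.carrier → ComputableMO M


namespace NFAux

/-- The 3-instruction block compiling the instruction `u` sitting at position `i`
of an instruction sequence of length `n`. -/
def block (n i : ℕ) : Instr → List Instr
  | .basic m   => [.postest m, .fjump (if i+1 < n then 2 else 0),
                   .fjump (if i+1 < n then 1 else 0)]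
  | .postest m => [.postest m, .fjump (if i+1 < n then 2 else 0),
                   .fjump (if i+2 < n then 4 else 0)]
  | .negtest m => [.postest m, .fjump (if i+2 < n then 5 else 0),
                   .fjump (if i+1 < n then 1 else 0)]
  | .fjump l   => [.fjump (if i+l < n then 3*l else 0), .fjump 0, .fjump 0]
  | .bjump l   => [.bjump (3*l), .fjump 0, .fjump 0]
  | .haltT     => [.fjump (3*(n-i)), .fjump 0, .fjump 0]
  | .haltF     => [.fjump (3*(n-i)+1), .fjump 0, .fjump 0]

lemma block_length (n i : ℕ) (u : Instr) : (block n i u).length = 3 := by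
  cases u <;> rfl

def compile (x : List Instr) : List Instr :=
  (List.range x.length).flatMap fun i => block x.length i (x.getD i .haltT)

def Y (x : List Instr) : List Instr := compile x ++ [.haltT, .haltF]

lemma lt_of_get? {α} {l : List α} {i : ℕ} {a : α} (h : l[i]? = some a) :
    i < l.length := by
  rcases List.getElem?_eq_some_iff.mp h with ⟨h, _⟩; exact h

lemma get?_of_lt {α} {l : List α} {i : ℕ} (h : i < l.length) (d : α) :
    l[i]? = some (l.getD i d) := by
  rw [List.getD_eq_getElem _ _ h]; exact List.getElem?_eq_some_iff.mpr ⟨h, rfl⟩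

lemma flatMap_range_length (f : ℕ → List Instr) (hf : ∀ j, (f j).length = 3) (n : ℕ) :
    ((List.range n).flatMap f).length = 3 * n := by
  induction n with
  | zero => simp
  | succ m ih =>
    rw [List.range_succ, List.flatMap_append, List.length_append, ih]
    simp [hf m]; ring

lemma flatMap_range_get (f : ℕ → List Instr) (hf : ∀ j, (f j).length = 3)
    {n i r : ℕ} (hi : i < n) (hr : r < 3) :
    ((List.range n).flatMap f)[3*i + r]? = (f i)[r]? := by
  induction n with
  | zero => omega
  | succ m ih =>
    rw [List.range_succ, List.flatMap_append, List.getElem?_append]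
    rw [flatMap_range_length f hf m]
    by_cases h : i < m
    · rw [if_pos (by omega)]; exact ih h
    · have : i = m := by omega
      subst this
      rw [if_neg (by omega)]
      simp only [List.flatMap_cons, List.flatMap_nil, List.append_nil]
      congr 1; omega

lemma compile_length (x : List Instr) : (compile x).length = 3 * x.length :=
  flatMap_range_length _ (fun j => block_length _ j _) _

lemma compile_get {x : List Instr} {i r : ℕ} (hi : i < x.length) (hr : r < 3) :
    (compile x)[3*i + r]? = (block x.length i (x.getD i .haltT))[r]? :=
  flatMap_range_get _ (fun j => block_length _ j _) hi hr

lemma Y_get_block {x : List Instr} {i r : ℕ} (hi : i < x.length) (hr : r < 3) :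
    (Y x)[3*i + r]? = (block x.length i (x.getD i .haltT))[r]? := by
  rw [Y, List.getElem?_append, if_pos (by rw [compile_length]; omega)]
  exact compile_get hi hr

lemma Y_get_T (x : List Instr) : (Y x)[3*x.length]? = some .haltT := by
  rw [Y, List.getElem?_append, if_neg (by rw [compile_length]; omega), compile_length]
  simp

lemma Y_get_F (x : List Instr) : (Y x)[3*x.length + 1]? = some .haltF := by
  rw [Y, List.getElem?_append, if_neg (by rw [compile_length]; omega), compile_length]
  have : 3*x.length + 1 - 3*x.length = 1 := by omega
  rw [this]; rfl

lemma Y_cases {x : List Instr} {p : ℕ} {v : Instr} (h : (Y x)[p]? = some v) :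
    (∃ i r, i < x.length ∧ r < 3 ∧ p = 3*i + r ∧
      (block x.length i (x.getD i .haltT))[r]? = some v) ∨
    (p = 3*x.length ∧ v = .haltT) ∨ (p = 3*x.length + 1 ∧ v = .haltF) := by
  have hlen : (Y x).length = 3*x.length + 2 := by
    rw [Y, List.length_append, compile_length]; rfl
  have hp : p < 3*x.length + 2 := by
    have := lt_of_get? h; omega
  by_cases h1 : p < 3*x.length
  · left
    obtain ⟨i, r, hi, hr, hp⟩ : ∃ i r, i < x.length ∧ r < 3 ∧ p = 3*i + r :=
      ⟨p/3, p%3, by omega, by omega, by omega⟩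
    subst hp
    exact ⟨i, r, hi, hr, rfl, by rw [← Y_get_block hi hr]; exact h⟩
  · by_cases h2 : p = 3*x.length
    · right; left; subst h2; rw [Y_get_T] at h
      exact ⟨rfl, (Option.some.inj h).symm⟩
    · right; right
      have h3 : p = 3*x.length + 1 := by omega
      subst h3; rw [Y_get_F] at h
      exact ⟨rfl, (Option.some.inj h).symm⟩

/-- The target block of slot `r ∈ {1,2}` of the block of instruction `u` at `i`. -/
def tgt (u : Instr) (r i : ℕ) : ℕ :=
  match u with
  | .basic _ => i+1
  | .postest _ => if r = 1 then i+1 else i+2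
  | .negtest _ => if r = 1 then i+2 else i+1
  | _ => 0

/-- What terminating executions of `Y x` from position `p` mean in terms of `x`. -/
def spec {S : Type*} (H : FU S) (x : List Instr) (p : ℕ) (s : S) (b : Bool) (s' : S) :
    Prop :=
  (∀ i, i < x.length → p = 3*i → Exec H x i s b s') ∧
  (∀ i r, i < x.length → (r = 1 ∨ r = 2) → p = 3*i + r →
      Exec H x (tgt (x.getD i .haltT) r i) s b s') ∧
  (p = 3*x.length → b = true ∧ s' = s) ∧
  (p = 3*x.length + 1 → b = false ∧ s' = s)

lemma spec_of_exec {S : Type*} {H : FU S} {x : List Instr} {i : ℕ} {s : S} {b : Bool}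
    {s' : S} (hi : i < x.length) (h : Exec H x i s b s') : spec H x (3*i) s b s' := by
  refine ⟨fun i' _ hp => ?_, fun i' r _ hr hp => absurd hp (by omega),
    fun hp => absurd hp (by omega), fun hp => absurd hp (by omega)⟩
  obtain rfl : i' = i := by omega
  exact h

lemma spec_mid {S : Type*} {H : FU S} {x : List Instr} {i r : ℕ} {s : S} {b : Bool}
    {s' : S} (hi : i < x.length) (hr : r = 1 ∨ r = 2)
    (h : Exec H x (tgt (x.getD i .haltT) r i) s b s') : spec H x (3*i + r) s b s' := by
  refine ⟨fun i' _ hp => absurd hp (by omega), fun i' r' _ hr' hp => ?_,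
    fun hp => absurd hp (by omega), fun hp => absurd hp (by omega)⟩
  obtain rfl : i' = i := by omega
  obtain rfl : r' = r := by omega
  exact h

lemma spec_T {S : Type*} {H : FU S} {x : List Instr} {s : S} :
    spec H x (3*x.length) s true s :=
  ⟨fun i hi hp => absurd hp (by omega), fun i r hi hr hp => absurd hp (by omega),
    fun _ => ⟨rfl, rfl⟩, fun hp => absurd hp (by omega)⟩

lemma spec_F {S : Type*} {H : FU S} {x : List Instr} {s : S} :
    spec H x (3*x.length + 1) s false s :=
  ⟨fun i hi hp => absurd hp (by omega), fun i r hi hr hp => absurd hp (by omega),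
    fun hp => absurd hp (by omega), fun _ => ⟨rfl, rfl⟩⟩

lemma exec_lt {S : Type*} {H : FU S} {x : List Instr} {p : ℕ} {s : S} {b : Bool}
    {s' : S} (h : Exec H x p s b s') : p < x.length := by
  cases h <;> exact lt_of_get? (by assumption)

lemma soundA {S : Type*} (H : FU S) (x : List Instr) {p : ℕ} {s : S} {b : Bool} {s' : S}
    (hE : Exec H (Y x) p s b s') : spec H x p s b s' := by
  induction hE with
  | @basic p s b s' m hu h ih =>
    exfalso
    rcases Y_cases hu with ⟨i, r, hi, hr3, rfl, hb⟩ | ⟨_, hv⟩ | ⟨_, hv⟩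
    · rcases hw : x.getD i .haltT with m' | m' | m' | l' | l' | _ | _ <;>
        interval_cases r <;> rw [hw] at hb <;> simp [block] at hb
    · exact Instr.noConfusion hv
    · exact Instr.noConfusion hv
  | @negT p s b s' m hu hbo h ih =>
    exfalso
    rcases Y_cases hu with ⟨i, r, hi, hr3, rfl, hb⟩ | ⟨_, hv⟩ | ⟨_, hv⟩
    · rcases hw : x.getD i .haltT with m' | m' | m' | l' | l' | _ | _ <;>
        interval_cases r <;> rw [hw] at hb <;> simp [block] at hb
    · exact Instr.noConfusion hv
    · exact Instr.noConfusion hv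
  | @negF p s b s' m hu hbo h ih =>
    exfalso
    rcases Y_cases hu with ⟨i, r, hi, hr3, rfl, hb⟩ | ⟨_, hv⟩ | ⟨_, hv⟩
    · rcases hw : x.getD i .haltT with m' | m' | m' | l' | l' | _ | _ <;>
        interval_cases r <;> rw [hw] at hb <;> simp [block] at hb
    · exact Instr.noConfusion hv
    · exact Instr.noConfusion hv
  | @haltT p s hu =>
    rcases Y_cases hu with ⟨i, r, hi, hr3, rfl, hb⟩ | ⟨hp, _⟩ | ⟨_, hv⟩
    · exfalso
      rcases hw : x.getD i .haltT with m' | m' | m' | l' | l' | _ | _ <;>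
        interval_cases r <;> rw [hw] at hb <;> simp [block] at hb
    · subst hp; exact spec_T
    · exact Instr.noConfusion hv
  | @haltF p s hu =>
    rcases Y_cases hu with ⟨i, r, hi, hr3, rfl, hb⟩ | ⟨_, hv⟩ | ⟨hp, _⟩
    · exfalso
      rcases hw : x.getD i .haltT with m' | m' | m' | l' | l' | _ | _ <;>
        interval_cases r <;> rw [hw] at hb <;> simp [block] at hb
    · exact Instr.noConfusion hv
    · subst hp; exact spec_F
  | @posT p s b s' m hu hbo h ih =>
    rcases Y_cases hu with ⟨i, r, hi, hr3, rfl, hb⟩ | ⟨_, hv⟩ | ⟨_, hv⟩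
    · have hx_i := get?_of_lt hi Instr.haltT
      rcases hw : x.getD i .haltT with m' | m' | m' | l' | l' | _ | _ <;>
          interval_cases r <;> rw [hw] at hb hx_i <;> simp [block] at hb <;> subst hb
      · -- basic m at i
        have hnext := ih.2.1 i 1 hi (Or.inl rfl) (by omega)
        rw [hw] at hnext; simp only [tgt] at hnext
        exact spec_of_exec hi (Exec.basic _ hx_i hnext)
      · -- postest m at i
        have hnext := ih.2.1 i 1 hi (Or.inl rfl) (by omega)
        rw [hw] at hnext; simp only [tgt, if_pos rfl] at hnext
        exact spec_of_exec hi (Exec.posT _ hx_i hbo hnext)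
      · -- negtest m at i
        have hnext := ih.2.1 i 1 hi (Or.inl rfl) (by omega)
        rw [hw] at hnext; simp only [tgt, if_pos rfl] at hnext
        exact spec_of_exec hi (Exec.negT _ hx_i hbo hnext)
    · exact Instr.noConfusion hv
    · exact Instr.noConfusion hv
  | @posF p s b s' m hu hbo h ih =>
    rcases Y_cases hu with ⟨i, r, hi, hr3, rfl, hb⟩ | ⟨_, hv⟩ | ⟨_, hv⟩
    · have hx_i := get?_of_lt hi Instr.haltT
      rcases hw : x.getD i .haltT with m' | m' | m' | l' | l' | _ | _ <;>
          interval_cases r <;> rw [hw] at hb hx_i <;> simp [block] at hb <;> subst hb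
      · -- basic m at i
        have hnext := ih.2.1 i 2 hi (Or.inr rfl) (by omega)
        rw [hw] at hnext; simp only [tgt] at hnext
        exact spec_of_exec hi (Exec.basic _ hx_i hnext)
      · -- postest m at i
        have hnext := ih.2.1 i 2 hi (Or.inr rfl) (by omega)
        rw [hw] at hnext; simp only [tgt] at hnext
        exact spec_of_exec hi (Exec.posF _ hx_i hbo hnext)
      · -- negtest m at i
        have hnext := ih.2.1 i 2 hi (Or.inr rfl) (by omega)
        rw [hw] at hnext; simp only [tgt] at hnext
        exact spec_of_exec hi (Exec.negF _ hx_i hbo hnext)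
    · exact Instr.noConfusion hv
    · exact Instr.noConfusion hv
  | @bjump p s b s' l hu hl h ih =>
    rcases Y_cases hu with ⟨i, r, hi, hr3, rfl, hb⟩ | ⟨_, hv⟩ | ⟨_, hv⟩
    · have hx_i := get?_of_lt hi Instr.haltT
      rcases hw : x.getD i .haltT with m' | m' | m' | l' | l' | _ | _ <;>
          interval_cases r <;> rw [hw] at hb <;> simp [block] at hb
      -- only survivor : bjump l' at slot 0
      subst hb
      rw [hw] at hx_i
      rw [show 3*i+0 - 3*l' = 3*(i-l') by omega] at ih
      have hnext := ih.1 (i - l') (by omega) rfl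
      exact spec_of_exec hi (Exec.bjump l' hx_i (by omega) hnext)
    · exact Instr.noConfusion hv
    · exact Instr.noConfusion hv
  | @fjump p s b s' l hu h ih =>
    rcases Y_cases hu with ⟨i, r, hi, hr3, rfl, hb⟩ | ⟨_, hv⟩ | ⟨_, hv⟩
    · have hx_i := get?_of_lt hi Instr.haltT
      rcases hw : x.getD i .haltT with m' | m' | m' | l' | l' | _ | _ <;>
          interval_cases r <;> rw [hw] at hb hx_i <;> simp [block] at hb
      · -- basic, slot 1, jump if i+1<n then 2 else 0
        by_cases hc : i + 1 < x.length
        · rw [if_pos hc] at hb; subst hb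
          refine spec_mid hi (Or.inl rfl) ?_
          rw [hw]; simp only [tgt]
          exact ih.1 (i+1) hc (by omega)
        · rw [if_neg hc] at hb; subst hb; exact ih
      · -- basic, slot 2, jump if i+1<n then 1 else 0
        by_cases hc : i + 1 < x.length
        · rw [if_pos hc] at hb; subst hb
          refine spec_mid hi (Or.inr rfl) ?_
          rw [hw]; simp only [tgt]
          exact ih.1 (i+1) hc (by omega)
        · rw [if_neg hc] at hb; subst hb; exact ih
      · -- postest, slot 1, jump if i+1<n then 2 else 0
        by_cases hc : i + 1 < x.length
        · rw [if_pos hc] at hb; subst hb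
          refine spec_mid hi (Or.inl rfl) ?_
          rw [hw]; simp only [tgt, if_pos rfl]
          exact ih.1 (i+1) hc (by omega)
        · rw [if_neg hc] at hb; subst hb; exact ih
      · -- postest, slot 2, jump if i+2<n then 4 else 0
        by_cases hc : i + 2 < x.length
        · rw [if_pos hc] at hb; subst hb
          refine spec_mid hi (Or.inr rfl) ?_
          rw [hw]; simp only [tgt]
          exact ih.1 (i+2) hc (by omega)
        · rw [if_neg hc] at hb; subst hb; exact ih
      · -- negtest, slot 1, jump if i+2<n then 5 else 0
        by_cases hc : i + 2 < x.length
        · rw [if_pos hc] at hb; subst hb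
          refine spec_mid hi (Or.inl rfl) ?_
          rw [hw]; simp only [tgt, if_pos rfl]
          exact ih.1 (i+2) hc (by omega)
        · rw [if_neg hc] at hb; subst hb; exact ih
      · -- negtest, slot 2, jump if i+1<n then 1 else 0
        by_cases hc : i + 1 < x.length
        · rw [if_pos hc] at hb; subst hb
          refine spec_mid hi (Or.inr rfl) ?_
          rw [hw]; simp only [tgt]
          exact ih.1 (i+1) hc (by omega)
        · rw [if_neg hc] at hb; subst hb; exact ih
      · -- fjump l', slot 0
        by_cases hc : i + l' < x.length
        · rw [if_pos hc] at hb; subst hb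
          have hnext := ih.1 (i+l') hc (by omega)
          exact spec_of_exec hi (Exec.fjump l' hx_i hnext)
        · rw [if_neg hc] at hb; subst hb; exact ih
      · subst hb; exact ih
      · subst hb; exact ih
      · subst hb; exact ih
      · subst hb; exact ih
      · -- haltT, slot 0: jump 3*(n-i)
        subst hb
        obtain ⟨rfl, rfl⟩ := ih.2.2.1 (by omega)
        exact spec_of_exec hi (Exec.haltT hx_i)
      · subst hb; exact ih
      · subst hb; exact ih
      · -- haltF, slot 0: jump 3*(n-i)+1
        subst hb
        obtain ⟨rfl, rfl⟩ := ih.2.2.2 (by omega)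
        exact spec_of_exec hi (Exec.haltF hx_i)
      · subst hb; exact ih
      · subst hb; exact ih
    · exact Instr.noConfusion hv
    · exact Instr.noConfusion hv

lemma getD_eq_of_get? {α} {l : List α} {i : ℕ} {a : α} (h : l[i]? = some a) (d : α) :
    l.getD i d = a := by
  have h2 := get?_of_lt (lt_of_get? h) d
  rw [h] at h2
  exact (Option.some.inj h2).symm

lemma soundB {S : Type*} {H : FU S} {x : List Instr} {i : ℕ} {s : S} {b : Bool} {s' : S}
    (h : Exec H x i s b s') : Exec H (Y x) (3*i) s b s' := by
  induction h with
  | @basic i s b s' m hu h ih =>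
    have hi : i < x.length := lt_of_get? hu
    have hn1 : i + 1 < x.length := exec_lt h
    have h0 := Y_get_block (x := x) hi (show 0 < 3 by omega)
    have h1 := Y_get_block (x := x) hi (show 1 < 3 by omega)
    have h2 := Y_get_block (x := x) hi (show 2 < 3 by omega)
    rw [getD_eq_of_get? hu] at h0 h1 h2
    simp [block, hn1] at h0 h1 h2
    rcases hb : (H.op m s).1
    · exact Exec.posF m h0 hb (Exec.fjump 1 h2
        (by rw [show 3*i+2+1 = 3*(i+1) by ring]; exact ih))
    · exact Exec.posT m h0 hb (Exec.fjump 2 h1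
        (by rw [show 3*i+1+2 = 3*(i+1) by ring]; exact ih))
  | @posT i s b s' m hu hr h ih =>
    have hi : i < x.length := lt_of_get? hu
    have hn1 : i + 1 < x.length := exec_lt h
    have h0 := Y_get_block (x := x) hi (show 0 < 3 by omega)
    have h1 := Y_get_block (x := x) hi (show 1 < 3 by omega)
    rw [getD_eq_of_get? hu] at h0 h1
    simp [block, hn1] at h0 h1
    exact Exec.posT m h0 hr (Exec.fjump 2 h1
      (by rw [show 3*i+1+2 = 3*(i+1) by ring]; exact ih))
  | @posF i s b s' m hu hr h ih =>
    have hi : i < x.length := lt_of_get? hu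
    have hn2 : i + 2 < x.length := exec_lt h
    have h0 := Y_get_block (x := x) hi (show 0 < 3 by omega)
    have h2 := Y_get_block (x := x) hi (show 2 < 3 by omega)
    rw [getD_eq_of_get? hu] at h0 h2
    simp [block, hn2] at h0 h2
    exact Exec.posF m h0 hr (Exec.fjump 4 h2
      (by rw [show 3*i+2+4 = 3*(i+2) by ring]; exact ih))
  | @negT i s b s' m hu hr h ih =>
    have hi : i < x.length := lt_of_get? hu
    have hn2 : i + 2 < x.length := exec_lt h
    have h0 := Y_get_block (x := x) hi (show 0 < 3 by omega)
    have h1 := Y_get_block (x := x) hi (show 1 < 3 by omega)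
    rw [getD_eq_of_get? hu] at h0 h1
    simp [block, hn2] at h0 h1
    exact Exec.posT m h0 hr (Exec.fjump 5 h1
      (by rw [show 3*i+1+5 = 3*(i+2) by ring]; exact ih))
  | @negF i s b s' m hu hr h ih =>
    have hi : i < x.length := lt_of_get? hu
    have hn1 : i + 1 < x.length := exec_lt h
    have h0 := Y_get_block (x := x) hi (show 0 < 3 by omega)
    have h2 := Y_get_block (x := x) hi (show 2 < 3 by omega)
    rw [getD_eq_of_get? hu] at h0 h2
    simp [block, hn1] at h0 h2
    exact Exec.posF m h0 hr (Exec.fjump 1 h2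
      (by rw [show 3*i+2+1 = 3*(i+1) by ring]; exact ih))
  | @fjump i s b s' l hu h ih =>
    have hi : i < x.length := lt_of_get? hu
    have hn : i + l < x.length := exec_lt h
    have h0 := Y_get_block (x := x) hi (show 0 < 3 by omega)
    rw [getD_eq_of_get? hu] at h0
    simp [block, hn] at h0
    exact Exec.fjump (3*l) h0
      (by rw [show 3*i+3*l = 3*(i+l) by ring]; exact ih)
  | @bjump i s b s' l hu hl h ih =>
    have hi : i < x.length := lt_of_get? hu
    have h0 := Y_get_block (x := x) hi (show 0 < 3 by omega)
    rw [getD_eq_of_get? hu] at h0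
    simp [block] at h0
    exact Exec.bjump (3*l) h0 (by omega)
      (by rw [show 3*i-3*l = 3*(i-l) by omega]; exact ih)
  | @haltT i s hu =>
    have hi : i < x.length := lt_of_get? hu
    have h0 := Y_get_block (x := x) hi (show 0 < 3 by omega)
    rw [getD_eq_of_get? hu] at h0
    simp [block] at h0
    exact Exec.fjump (3*(x.length - i)) h0
      (by rw [show 3*i+3*(x.length-i) = 3*x.length by omega]
          exact Exec.haltT (Y_get_T x))
  | @haltF i s hu =>
    have hi : i < x.length := lt_of_get? hu
    have h0 := Y_get_block (x := x) hi (show 0 < 3 by omega)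
    rw [getD_eq_of_get? hu] at h0
    simp [block] at h0
    exact Exec.fjump (3*(x.length - i) + 1) h0
      (by rw [show 3*i+(3*(x.length-i)+1) = 3*x.length+1 by omega]
          exact Exec.haltF (Y_get_F x))

end NFAux

/-- Normal form: for every nonempty `S`, functional unit `H` for `S`, and instruction
sequence `x` over `I(H)`, there is an instruction sequence `y = u_1,…,u_k,!t,!f` over
`I(H)`, with each `u_i` a positive test, forward jump, or backward jump instruction,
such that `⌈y⌉_H = ⌈x⌉_H` as partial functions. -/
theorem normal_form {S : Type*} [Nonempty S] (H : FU S) (x : List Instr)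
    (hx : InstrSeqOver H.iface x) :
    ∃ u : List Instr,
      (∀ v ∈ u, (∃ m, v = Instr.postest m) ∨ (∃ l, v = Instr.fjump l) ∨
        (∃ l, v = Instr.bjump l)) ∧
      InstrSeqOver H.iface (u ++ [Instr.haltT, Instr.haltF]) ∧
      ∀ s b s', Exec H (u ++ [Instr.haltT, Instr.haltF]) 0 s b s' ↔
        Exec H x 0 s b s' := by
  obtain ⟨hne, hnames⟩ := hx
  refine ⟨NFAux.compile x, ?_, ⟨by simp, ?_⟩, ?_⟩
  · intro v hv
    rw [NFAux.compile, List.mem_flatMap] at hv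
    obtain ⟨i, -, hv⟩ := hv
    rcases hw : x.getD i Instr.haltT with m|m|m|l|l|_|_ <;> rw [hw] at hv <;>
      simp [NFAux.block] at hv <;>
      rcases hv with rfl | rfl | rfl <;>
      first
        | exact Or.inl ⟨_, rfl⟩
        | exact Or.inr (Or.inl ⟨_, rfl⟩)
        | exact Or.inr (Or.inr ⟨_, rfl⟩)
  · intro u hu
    rcases List.mem_append.mp hu with hu | hu
    · rw [NFAux.compile, List.mem_flatMap] at hu
      obtain ⟨i, hi, hu⟩ := hu
      rw [List.mem_range] at hi
      have hmem : x.getD i Instr.haltT ∈ x := by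
        rw [List.getD_eq_getElem _ _ hi]; exact List.getElem_mem hi
      have hn := hnames _ hmem
      rcases hw : x.getD i Instr.haltT with m|m|m|l|l|_|_ <;> rw [hw] at hu hn <;>
        simp [NFAux.block] at hu <;>
        rcases hu with rfl | rfl | rfl <;> first | exact hn | trivial
    · simp at hu
      rcases hu with rfl | rfl <;> trivial
  · intro s b s'
    have hn0 : 0 < x.length := List.length_pos_iff.mpr hne
    constructor
    · intro h
      exact (NFAux.soundA H x h).1 0 hn0 (by omega)
    · intro h
      exact NFAux.soundB h
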